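/- arXiv:1904.06283 — 2 statements merged into one kernel-verified Lean document; each statement's English description precedes it below -/
import Mathlib

section
/- For every π ∈ S_n, the permutation s(π)⁻¹ · π avoids 231 and has the same skeleton as π; consequently sw↓(π) = s(π)⁻¹ · π, where sw↓(π) denotes the unique 231-avoiding permutation with the same skeleton as π. -/
/-- `l` is a permutation of `{1, …, n}`, written as a word. -/
def IsPermList (n : ℕ) (l : List ℕ) : Prop := l.Perm (List.range' 1 n)

/-- The word obtained from `l` by exchanging the positions of the entries `i` and `i+1`. -/
def swapEntries (i : ℕ) (l : List ℕ) : List ℕ :=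
  l.map fun x => if x = i then i + 1 else if x = i + 1 then i else x

/-- Some entry larger than `i+1` appears (strictly) between the entries `i` and `i+1`
in the word `l`. -/
def ToggleApplies (i : ℕ) (l : List ℕ) : Prop :=
  ∃ a ∈ l, i + 1 < a ∧
    min (l.idxOf i) (l.idxOf (i + 1)) < l.idxOf a ∧
    l.idxOf a < max (l.idxOf i) (l.idxOf (i + 1))

open scoped Classical in
/-- The polyurethane toggle `p i`. -/
noncomputable def toggle (i : ℕ) (l : List ℕ) : List ℕ :=
  if ToggleApplies i l then swapEntries i l else l

lemma max_getD_mem (l : List ℕ) (h : l ≠ []) : l.max?.getD 0 ∈ l := by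
  rcases hm : l.max? with _ | m'
  · exact absurd (List.max?_eq_none_iff.mp hm) h
  · simpa using List.max?_mem hm

lemma length_takeWhile_lt (p : ℕ → Bool) (l : List ℕ) (x : ℕ) (hx : x ∈ l) (hpx : p x = false) :
    (l.takeWhile p).length < l.length := by
  rcases Nat.lt_or_ge (l.takeWhile p).length l.length with h | h
  · exact h
  · have := List.takeWhile_eq_self_iff.mp ((List.takeWhile_sublist p).eq_of_length_le h) x hx
    rw [hpx] at this; exact absurd this (by simp)

lemma length_dropWhile_tail_lt (p : ℕ → Bool) (l : List ℕ) (h : l ≠ []) :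
    ((l.dropWhile p).tail).length < l.length := by
  have h1 : (l.dropWhile p).length ≤ l.length := (List.dropWhile_sublist _).length_le
  have h2 : ((l.dropWhile p).tail).length ≤ (l.dropWhile p).length - 1 := by
    simp [List.length_tail]
  have : 0 < l.length := List.length_pos_iff.mpr h
  omega

/-- West's stack-sorting map `s`: `s([]) = []` and `s(LmR) = s(L) s(R) m`,
where `m` is the largest entry. -/
def stackSort : List ℕ → List ℕ
  | [] => []
  | a :: rest =>
    stackSort ((a :: rest).takeWhile (· ≠ (a :: rest).max?.getD 0)) ++
      stackSort (((a :: rest).dropWhile (· ≠ (a :: rest).max?.getD 0)).tail) ++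
      [(a :: rest).max?.getD 0]
termination_by l => l.length
decreasing_by
  · exact length_takeWhile_lt _ _ _ (max_getD_mem (a :: rest) (by simp)) (by simp)
  · exact length_dropWhile_tail_lt _ _ (by simp)

/-- The inverse of the permutation `l` of `{1, …, n}`, as a word: its `k`-th entry is the
position (1-indexed) of the entry `k` in `l`. -/
def invw (l : List ℕ) : List ℕ := (List.range' 1 l.length).map fun k => l.idxOf k + 1

/-- The composition `l · m` of permutations written as words: `(l · m) j = l (m j)`. -/
def compw (l m : List ℕ) : List ℕ := m.map fun k => l.getD (k - 1) 0

/-- The group element `π⁻¹ · s(π)`, which encodes the skeleton of `π`: two permutations of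
`{1, …, n}` have the same skeleton if and only if their `skel`s coincide. -/
def skel (l : List ℕ) : List ℕ := compw (invw l) (stackSort l)

/-- `l` contains the pattern 231. -/
def Contains231 (l : List ℕ) : Prop :=
  ∃ j₁ j₂ j₃, j₁ < j₂ ∧ j₂ < j₃ ∧ j₃ < l.length ∧
    l.getD j₃ 0 < l.getD j₁ 0 ∧ l.getD j₁ 0 < l.getD j₂ 0

/-- `l` avoids the pattern 231. -/
def Avoids231 (l : List ℕ) : Prop := ¬ Contains231 l

/-- `l` avoids the pattern 132. -/
def Avoids132 (l : List ℕ) : Prop :=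
  ¬ ∃ j₁ j₂ j₃, j₁ < j₂ ∧ j₂ < j₃ ∧ j₃ < l.length ∧
    l.getD j₁ 0 < l.getD j₃ 0 ∧ l.getD j₃ 0 < l.getD j₂ 0

/-- `l` avoids the pattern 312. -/
def Avoids312 (l : List ℕ) : Prop :=
  ¬ ∃ j₁ j₂ j₃, j₁ < j₂ ∧ j₂ < j₃ ∧ j₃ < l.length ∧
    l.getD j₂ 0 < l.getD j₃ 0 ∧ l.getD j₃ 0 < l.getD j₁ 0

/-! ### Auxiliary development -/

section Aux

open List

/-- Decomposition of a nonempty list around its maximum. -/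
lemma decomp_max (l : List ℕ) (h : l ≠ []) :
    l = l.takeWhile (· ≠ l.max?.getD 0) ++
      l.max?.getD 0 :: (l.dropWhile (· ≠ l.max?.getD 0)).tail := by
  have hm := max_getD_mem l h
  have hne : l.dropWhile (fun x => decide (x ≠ l.max?.getD 0)) ≠ [] := by
    intro hd
    have := List.dropWhile_eq_nil_iff.mp hd _ hm
    simp at this
  have hh := List.head_dropWhile_not (fun x => decide (x ≠ l.max?.getD 0)) hne
  have hhead : (l.dropWhile (fun x => decide (x ≠ l.max?.getD 0))).head hne = l.max?.getD 0 := by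
    simpa using hh
  conv_lhs => rw [← List.takeWhile_append_dropWhile (p := fun x => decide (x ≠ l.max?.getD 0))
    (l := l)]
  congr 1
  conv_lhs => rw [← List.cons_head_tail hne]
  rw [hhead]

lemma stackSort_eq (l : List ℕ) (h : l ≠ []) :
    stackSort l = stackSort (l.takeWhile (· ≠ l.max?.getD 0)) ++
      stackSort ((l.dropWhile (· ≠ l.max?.getD 0)).tail) ++ [l.max?.getD 0] := by
  cases l with
  | nil => exact absurd rfl h
  | cons a rest => rw [stackSort]

lemma stackSort_nil : stackSort [] = [] := by rw [stackSort]

lemma le_max_of_mem {l : List ℕ} {x : ℕ} (hx : x ∈ l) : x ≤ l.max?.getD 0 := by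
  rcases hm : l.max? with _ | m
  · exact absurd (List.max?_eq_none_iff.mp hm) (List.ne_nil_of_mem hx)
  · have := List.max?_le_iff hm (x := m)
    simpa using (this.mp le_rfl) x hx

lemma stackSort_perm (l : List ℕ) : stackSort l ~ l := by
  rcases eq_or_ne l [] with rfl | h
  · rw [stackSort_nil]
  · rw [stackSort_eq l h]
    have h1 := stackSort_perm (l.takeWhile (· ≠ l.max?.getD 0))
    have h2 := stackSort_perm ((l.dropWhile (· ≠ l.max?.getD 0)).tail)
    calc stackSort (l.takeWhile (· ≠ l.max?.getD 0)) ++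
          stackSort ((l.dropWhile (· ≠ l.max?.getD 0)).tail) ++ [l.max?.getD 0]
        ~ l.takeWhile (· ≠ l.max?.getD 0) ++
          ((l.dropWhile (· ≠ l.max?.getD 0)).tail ++ [l.max?.getD 0]) := by
          rw [List.append_assoc]
          exact (h1.append (h2.append (List.Perm.refl _)))
      _ ~ l.takeWhile (· ≠ l.max?.getD 0) ++
          (l.max?.getD 0 :: (l.dropWhile (· ≠ l.max?.getD 0)).tail) :=
          (List.Perm.refl _).append (List.perm_append_singleton _ _)
      _ = l := (decomp_max l h).symm
termination_by l.length
decreasing_by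
  · exact length_takeWhile_lt _ _ _ (max_getD_mem l h) (by simp)
  · exact length_dropWhile_tail_lt _ _ h

/-- Entry of a list at a valid index is a member. -/
lemma getD_mem {l : List ℕ} {j : ℕ} (hj : j < l.length) : l.getD j 0 ∈ l := by
  rw [List.getD_eq_getElem _ _ hj]; exact List.getElem_mem _

lemma avoids231_nil : Avoids231 ([] : List ℕ) := by
  rintro ⟨j1, j2, j3, h12, h23, h3, -⟩
  simp at h3

/-- Avoidance of 231 for a list of the form `A ++ N :: B` with `A`-entries at most `c`,
`B`-entries greater than `c`, and `N` exceeding everything. -/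
lemma avoids231_glue (A B : List ℕ) (N c : ℕ)
    (hA : Avoids231 A) (hB : Avoids231 B)
    (hAle : ∀ x ∈ A, x ≤ c) (hBgt : ∀ x ∈ B, c < x)
    (hNA : ∀ x ∈ A, x < N) (hNB : ∀ x ∈ B, x < N) :
    Avoids231 (A ++ N :: B) := by
  rintro ⟨j1, j2, j3, h12, h23, h3, hv1, hv2⟩
  have hlen : (A ++ N :: B).length = A.length + B.length + 1 := by simp; omega
  set a := A.length with ha
  -- values
  have hval : ∀ j, j < (A ++ N :: B).length →
      (j < a ∧ (A ++ N :: B).getD j 0 ∈ A) ∨ (j = a ∧ (A ++ N :: B).getD j 0 = N) ∨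
      (a < j ∧ (A ++ N :: B).getD j 0 ∈ B) := by
    intro j hj
    rcases lt_trichotomy j a with hja | hja | hja
    · left
      refine ⟨hja, ?_⟩
      rw [List.getD_append _ _ _ _ hja]
      exact getD_mem hja
    · right; left
      refine ⟨hja, ?_⟩
      rw [List.getD_append_right _ _ _ _ (le_of_eq hja.symm), hja]
      simp [ha]
    · right; right
      refine ⟨hja, ?_⟩
      rw [List.getD_append_right _ _ _ _ (le_of_lt hja)]
      have h1 : j - a ≠ 0 := by omega
      rcases Nat.exists_eq_succ_of_ne_zero h1 with ⟨k, hk⟩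
      rw [hk]
      simp only [List.getD_cons_succ]
      exact getD_mem (by rw [hlen] at hj; omega)
  have h1' := hval j1 (lt_trans (lt_trans h12 h23) h3)
  have h2' := hval j2 (lt_trans h23 h3)
  have h3' := hval j3 h3
  rcases h2' with ⟨hj2, hm2⟩ | ⟨hj2, hm2⟩ | ⟨hj2, hm2⟩
  · -- j2 in A, so j1 in A
    rcases h1' with ⟨hj1, hm1⟩ | ⟨hj1, hm1⟩ | ⟨hj1, hm1⟩
    · rcases h3' with ⟨hj3, hm3⟩ | ⟨hj3, hm3⟩ | ⟨hj3, hm3⟩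
      · -- all in A
        refine hA ⟨j1, j2, j3, h12, h23, hj3, ?_, ?_⟩
        · rw [List.getD_append _ _ _ _ hj1, List.getD_append _ _ _ _ hj3] at hv1; exact hv1
        · rw [List.getD_append _ _ _ _ hj1, List.getD_append _ _ _ _ hj2] at hv2; exact hv2
      · exact absurd hv1 (by rw [hm3]; exact not_lt.mpr (le_of_lt (hNA _ hm1)))
      · exact absurd hv1 (not_lt.mpr (le_of_lt (lt_of_le_of_lt (hAle _ hm1) (hBgt _ hm3))))
    · omega
    · omega
  · -- j2 = a, value N; j1 in A, j3 in B
    have hj1A : j1 < a := by omega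
    have hj3B : a < j3 := by omega
    rcases h1' with ⟨-, hm1⟩ | ⟨h, -⟩ | ⟨h, -⟩
    · rcases h3' with ⟨h, -⟩ | ⟨h, -⟩ | ⟨-, hm3⟩
      · omega
      · omega
      · exact absurd hv1 (not_lt.mpr (le_of_lt (lt_of_le_of_lt (hAle _ hm1) (hBgt _ hm3))))
    · omega
    · omega
  · -- j2 in B, so j3 in B
    have hj3B : a < j3 := lt_trans hj2 h23
    rcases h3' with ⟨h, -⟩ | ⟨h, -⟩ | ⟨-, hm3⟩
    · omega
    · omega
    rcases h1' with ⟨hj1, hm1⟩ | ⟨hj1, hm1⟩ | ⟨hj1, hm1⟩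
    · exact absurd hv1 (not_lt.mpr (le_of_lt (lt_of_le_of_lt (hAle _ hm1) (hBgt _ hm3))))
    · -- j1 value N, but value at j2 > N impossible
      exact absurd hv2 (by rw [hm1]; exact not_lt.mpr (le_of_lt (hNB _ hm2)))
    · -- all in B
      have hgd : ∀ j, a < j → j < (A ++ N :: B).length →
          (A ++ N :: B).getD j 0 = B.getD (j - a - 1) 0 := by
        intro j hja hj
        rw [List.getD_append_right _ _ _ _ (le_of_lt hja)]
        have h1 : j - a ≠ 0 := by omega
        rcases Nat.exists_eq_succ_of_ne_zero h1 with ⟨k, hk⟩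
        rw [hk]
        simp [Nat.succ_sub_one]
      refine hB ⟨j1 - a - 1, j2 - a - 1, j3 - a - 1, by omega, by omega, ?_, ?_, ?_⟩
      · rw [hlen] at h3; omega
      · rw [← hgd j1 hj1 (by omega), ← hgd j3 hj3B (by omega)]; exact hv1
      · rw [← hgd j1 hj1 (by omega), ← hgd j2 hj2 (by omega)]; exact hv2

lemma avoids231_map_add {B : List ℕ} (c : ℕ) (hB : Avoids231 B) :
    Avoids231 (B.map (· + c)) := by
  rintro ⟨j1, j2, j3, h12, h23, h3, hv1, hv2⟩
  rw [List.length_map] at h3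
  have hg : ∀ j, j < B.length → (B.map (· + c)).getD j 0 = B.getD j 0 + c := by
    intro j hj
    rw [List.getD_eq_getElem _ _ (by simpa using hj), List.getElem_map,
      List.getD_eq_getElem _ _ hj]
  rw [hg j1 (by omega), hg j3 (by omega)] at hv1
  rw [hg j1 (by omega), hg j2 (by omega)] at hv2
  exact hB ⟨j1, j2, j3, h12, h23, h3, by omega, by omega⟩

/-- The core lemma: positions of the entries of `l` within `stackSort l` form a
231-avoiding word. -/
lemma avoids231_posMap (l : List ℕ) (hnd : l.Nodup) :
    Avoids231 (l.map fun k => (stackSort l).idxOf k + 1) := by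
  rcases eq_or_ne l [] with rfl | h
  · simpa using avoids231_nil
  · have hdec := decomp_max l h
    have hsort := stackSort_eq l h
    set M := l.max?.getD 0 with hM
    set L := l.takeWhile (· ≠ M) with hL
    set R := (l.dropWhile (· ≠ M)).tail with hR
    have hndL : L.Nodup := by rw [hdec] at hnd; exact (List.nodup_append.mp hnd).1
    have hndR : R.Nodup := by
      rw [hdec] at hnd
      exact (List.nodup_cons.mp (List.nodup_append.mp hnd).2.1).2
    have hMR : M ∉ R := by
      rw [hdec] at hnd
      exact (List.nodup_cons.mp (List.nodup_append.mp hnd).2.1).1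
    have hML : M ∉ L := by
      rw [hdec] at hnd
      intro hm
      exact (List.disjoint_left.mp (List.disjoint_of_nodup_append hnd) hm) (by simp)
    have hdisj : ∀ x ∈ L, x ∉ R := by
      rw [hdec] at hnd
      intro x hx hxR
      exact (List.disjoint_left.mp (List.disjoint_of_nodup_append hnd) hx) (by simp [hxR])
    have hIH_L := avoids231_posMap L hndL
    have hIH_R := avoids231_posMap R hndR
    set sL := stackSort L with hsL
    set sR := stackSort R with hsR
    have hpL : sL ~ L := stackSort_perm L
    have hpR : sR ~ R := stackSort_perm R
    have hlenL : sL.length = L.length := hpL.length_eq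
    have hlenR : sR.length = R.length := hpR.length_eq
    -- rewrite the big map
    have hmain : l.map (fun k => (stackSort l).idxOf k + 1) =
        (L.map fun k => sL.idxOf k + 1) ++
          (sL.length + sR.length + 1) ::
          ((R.map fun k => sR.idxOf k + 1).map (· + sL.length)) := by
      rw [hsort]
      conv_lhs => rw [hdec]
      rw [List.map_append, List.map_cons]
      congr 1
      · apply List.map_congr_left
        intro k hk
        have hkL : k ∈ sL := hpL.mem_iff.mpr hk
        rw [List.append_assoc, List.idxOf_append_of_mem hkL]
      congr 1
      · rw [List.idxOf_append_of_notMem (by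
          intro hc
          rcases List.mem_append.mp hc with hc | hc
          · exact hML (hpL.subset hc)
          · exact hMR (hpR.subset hc))]
        simp
      · rw [List.map_map]
        apply List.map_congr_left
        intro k hk
        have hkR : k ∈ sR := hpR.mem_iff.mpr hk
        have hknL : k ∉ sL := fun hc => hdisj _ (hpL.subset hc) hk
        have hknM : k ≠ M := fun hc => hMR (hc ▸ hk)
        simp only [Function.comp]
        rw [List.append_assoc, List.idxOf_append_of_notMem hknL,
          List.idxOf_append_of_mem hkR]
        omega
    rw [hmain]
    apply avoids231_glue _ _ _ sL.length hIH_L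
      (avoids231_map_add sL.length hIH_R)
    · intro x hx
      rcases List.mem_map.mp hx with ⟨k, hk, rfl⟩
      have : sL.idxOf k < sL.length := List.idxOf_lt_length_iff.mpr (hpL.mem_iff.mpr hk)
      omega
    · intro x hx
      rcases List.mem_map.mp hx with ⟨y, hy, rfl⟩
      rcases List.mem_map.mp hy with ⟨k, hk, rfl⟩
      omega
    · intro x hx
      rcases List.mem_map.mp hx with ⟨k, hk, rfl⟩
      have : sL.idxOf k < sL.length := List.idxOf_lt_length_iff.mpr (hpL.mem_iff.mpr hk)
      omega
    · intro x hx
      rcases List.mem_map.mp hx with ⟨y, hy, rfl⟩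
      rcases List.mem_map.mp hy with ⟨k, hk, rfl⟩
      have : sR.idxOf k < sR.length := List.idxOf_lt_length_iff.mpr (hpR.mem_iff.mpr hk)
      omega
termination_by l.length
decreasing_by
  · exact length_takeWhile_lt _ _ _ (max_getD_mem l h) (by simp)
  · exact length_dropWhile_tail_lt _ _ h

lemma avoids231_of_append_left {A B : List ℕ} (h : Avoids231 (A ++ B)) : Avoids231 A := by
  rintro ⟨j1, j2, j3, h12, h23, h3, hv1, hv2⟩
  refine h ⟨j1, j2, j3, h12, h23, lt_of_lt_of_le h3 (by simp), ?_, ?_⟩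
  · rw [List.getD_append A B 0 j3 h3, List.getD_append A B 0 j1 (by omega)]; exact hv1
  · rw [List.getD_append A B 0 j2 (by omega), List.getD_append A B 0 j1 (by omega)]; exact hv2

lemma avoids231_of_append_right {A B : List ℕ} (h : Avoids231 (A ++ B)) : Avoids231 B := by
  rintro ⟨j1, j2, j3, h12, h23, h3, hv1, hv2⟩
  have hg : ∀ j, j < B.length → (A ++ B).getD (A.length + j) 0 = B.getD j 0 := by
    intro j hj
    rw [List.getD_append_right _ _ _ _ (by omega)]
    congr 1
    omega
  refine h ⟨A.length + j1, A.length + j2, A.length + j3, by omega, by omega, by simp; omega,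
    ?_, ?_⟩
  · rw [hg j1 (by omega), hg j3 h3]; exact hv1
  · rw [hg j1 (by omega), hg j2 (by omega)]; exact hv2

/-- If `l` is nodup and avoids 231 then its stack-sort is strictly sorted. -/
lemma stackSort_sorted (l : List ℕ) (hnd : l.Nodup) (hav : Avoids231 l) :
    (stackSort l).Pairwise (· < ·) := by
  rcases eq_or_ne l [] with rfl | h
  · rw [stackSort_nil]; exact List.Pairwise.nil
  · have hdec := decomp_max l h
    have hsort := stackSort_eq l h
    set M := l.max?.getD 0 with hM
    set L := l.takeWhile (· ≠ M) with hL
    set R := (l.dropWhile (· ≠ M)).tail with hR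
    have hndL : L.Nodup := by rw [hdec] at hnd; exact (List.nodup_append.mp hnd).1
    have hndR : R.Nodup := by
      rw [hdec] at hnd
      exact (List.nodup_cons.mp (List.nodup_append.mp hnd).2.1).2
    have hMR : M ∉ R := by
      rw [hdec] at hnd
      exact (List.nodup_cons.mp (List.nodup_append.mp hnd).2.1).1
    have hML : M ∉ L := by
      rw [hdec] at hnd
      intro hm
      exact (List.disjoint_left.mp (List.disjoint_of_nodup_append hnd) hm) (by simp)
    -- sub-avoidance
    have havL : Avoids231 L := avoids231_of_append_left (hdec ▸ hav)
    have havR : Avoids231 R := by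
      have h1 : Avoids231 (M :: R) := avoids231_of_append_right (hdec ▸ hav)
      exact avoids231_of_append_right (A := [M]) (B := R) (by simpa using h1)
    have hdisj : ∀ x ∈ L, x ∉ R := by
      rw [hdec] at hnd
      intro x hx hxR
      exact (List.disjoint_left.mp (List.disjoint_of_nodup_append hnd) hx) (by simp [hxR])
    -- all entries of L less than all entries of R
    have hLR : ∀ x ∈ L, ∀ y ∈ R, x < y := by
      intro x hx y hy
      by_contra hc
      push_neg at hc
      have hyx : y < x := lt_of_le_of_ne hc (fun he => hdisj x hx (he ▸ hy))
      rcases List.mem_iff_getElem.mp hx with ⟨i, hi, hix⟩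
      rcases List.mem_iff_getElem.mp hy with ⟨j, hj, hjy⟩
      have hxM : x < M := by
        have h1 : x ≤ M := le_max_of_mem (hdec ▸ (List.mem_append.mpr (Or.inl hx)))
        exact lt_of_le_of_ne h1 (fun he => hML (he ▸ hx))
      have hg1 : l.getD i 0 = x := by
        rw [hdec, List.getD_append _ _ _ _ hi, List.getD_eq_getElem _ _ hi, hix]
      have hg2 : l.getD L.length 0 = M := by
        rw [hdec, List.getD_append_right _ _ _ _ le_rfl]
        simp
      have hg3 : l.getD (L.length + 1 + j) 0 = y := by
        rw [hdec, List.getD_append_right _ _ _ _ (by omega)]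
        have : L.length + 1 + j - L.length = j + 1 := by omega
        rw [this]
        simp only [List.getD_cons_succ]
        rw [List.getD_eq_getElem _ _ hj, hjy]
      refine hav ⟨i, L.length, L.length + 1 + j, hi, by omega, ?_, ?_, ?_⟩
      · rw [hdec]; simp; omega
      · rw [hg1, hg3]; exact hyx
      · rw [hg1, hg2]; exact hxM
    -- conclude sortedness
    have hsL := stackSort_sorted L hndL havL
    have hsR := stackSort_sorted R hndR havR
    have hpL : stackSort L ~ L := stackSort_perm L
    have hpR : stackSort R ~ R := stackSort_perm R
    have hltM : ∀ x ∈ l, x ≠ M → x < M :=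
      fun x hx hne => lt_of_le_of_ne (le_max_of_mem hx) hne
    rw [hsort]
    rw [List.pairwise_append, List.pairwise_append]
    refine ⟨⟨hsL, hsR, ?_⟩, by simp, ?_⟩
    · intro x hx y hy
      exact hLR x (hpL.subset hx) y (hpR.subset hy)
    · intro x hx y hy
      simp only [List.mem_singleton] at hy
      subst hy
      rcases List.mem_append.mp hx with hx | hx
      · have hxL := hpL.subset hx
        exact hltM x (hdec ▸ List.mem_append.mpr (Or.inl hxL)) (fun he => hML (he ▸ hxL))
      · have hxR := hpR.subset hx
        exact hltM x (hdec ▸ List.mem_append.mpr (Or.inr (List.mem_cons_of_mem _ hxR)))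
          (fun he => hMR (he ▸ hxR))
termination_by l.length
decreasing_by
  · exact length_takeWhile_lt _ _ _ (max_getD_mem l h) (by simp)
  · exact length_dropWhile_tail_lt _ _ h

/-! ### Word algebra -/

lemma isPermList_length {n : ℕ} {w : List ℕ} (h : IsPermList n w) : w.length = n := by
  simpa using h.length_eq

lemma isPermList_nodup {n : ℕ} {w : List ℕ} (h : IsPermList n w) : w.Nodup :=
  h.nodup_iff.mpr (List.nodup_range')

lemma isPermList_mem {n : ℕ} {w : List ℕ} (h : IsPermList n w) {x : ℕ} :
    x ∈ w ↔ 1 ≤ x ∧ x ≤ n := by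
  rw [h.mem_iff, List.mem_range'_1]
  omega

lemma indexOf_inj_of_mem {s : List ℕ} {x y : ℕ} (hx : x ∈ s) (hy : y ∈ s)
    (h : s.idxOf x = s.idxOf y) : x = y := by
  have h1 : s.idxOf x < s.length := List.idxOf_lt_length_iff.mpr hx
  have h2 : s.idxOf y < s.length := List.idxOf_lt_length_iff.mpr hy
  have e1 := List.getElem_idxOf h1
  have e2 := List.getElem_idxOf h2
  rw [← e1, ← e2]
  congr 1

lemma compw_invw_eq (s l : List ℕ) (h : ∀ k ∈ l, 1 ≤ k ∧ k ≤ s.length) :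
    compw (invw s) l = l.map fun k => s.idxOf k + 1 := by
  unfold compw invw
  apply List.map_congr_left
  intro k hk
  obtain ⟨h1, h2⟩ := h k hk
  rw [List.getD_eq_getElem _ _ (by simp; omega), List.getElem_map, List.getElem_range']
  rw [show 1 + 1 * (k - 1) = k by omega]

lemma isPermList_posMap {n : ℕ} {s l : List ℕ} (hs : IsPermList n s) (hl : IsPermList n l) :
    IsPermList n (l.map fun k => s.idxOf k + 1) := by
  have hnd : (l.map fun k => s.idxOf k + 1).Nodup := by
    refine List.Nodup.map_on ?_ (isPermList_nodup hl)
    intro x hx y hy hxy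
    exact indexOf_inj_of_mem ((isPermList_mem hs).mpr ((isPermList_mem hl).mp hx))
      ((isPermList_mem hs).mpr ((isPermList_mem hl).mp hy)) (by omega)
  have hsub : (l.map fun k => s.idxOf k + 1) ⊆ List.range' 1 n := by
    intro x hx
    rcases List.mem_map.mp hx with ⟨k, hk, rfl⟩
    have : s.idxOf k < s.length :=
      List.idxOf_lt_length_iff.mpr ((isPermList_mem hs).mpr ((isPermList_mem hl).mp hk))
    rw [List.mem_range'_1]
    rw [isPermList_length hs] at this
    omega
  exact (hnd.subperm hsub).perm_of_length_le (by simp [isPermList_length hl])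

lemma stackSort_eq_range {n : ℕ} {w : List ℕ} (h : IsPermList n w) (hav : Avoids231 w) :
    stackSort w = List.range' 1 n := by
  haveI : Std.Antisymm (α := ℕ) (· < ·) := ⟨fun a b h1 h2 => absurd h1 (not_lt.mpr h2.le)⟩
  refine List.Perm.eq_of_pairwise' (stackSort_sorted w (isPermList_nodup h) hav) ?_
    ((stackSort_perm w).trans h)
  exact List.pairwise_lt_range'

lemma compw_range' (w : List ℕ) {n : ℕ} (hlen : w.length = n) :
    compw w (List.range' 1 n) = w := by
  unfold compw
  apply List.ext_getElem (by simp [hlen])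
  intro i h1 h2
  rw [List.getElem_map, List.getElem_range']
  rw [List.getD_eq_getElem _ _ (by omega)]
  congr 1
  omega

lemma length_invw (w : List ℕ) : (invw w).length = w.length := by simp [invw]

lemma invw_getElem (w : List ℕ) {j : ℕ} (hj : j < (invw w).length) :
    (invw w)[j] = w.idxOf (j + 1) + 1 := by
  unfold invw at hj ⊢
  rw [List.getElem_map, List.getElem_range']
  rw [show 1 + 1 * j = j + 1 by omega]

lemma skel_eq_invw {n : ℕ} {w : List ℕ} (h : IsPermList n w) (hav : Avoids231 w) :
    skel w = invw w := by
  unfold skel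
  rw [stackSort_eq_range h hav, compw_range' _ (by rw [length_invw, isPermList_length h])]

/-- Transfer of indices: if `σ = w ∘ (positions in s)`, then `σ.idxOf (j+1)` is
`w.idxOf s[j]`. -/
lemma indexOf_posMap {n : ℕ} {s w : List ℕ} (hs : IsPermList n s) (hw : IsPermList n w)
    {j : ℕ} (hj : j < s.length) :
    (w.map fun k => s.idxOf k + 1).idxOf (j + 1) = w.idxOf s[j] := by
  have hmem : s[j] ∈ w := (isPermList_mem hw).mpr ((isPermList_mem hs).mp (List.getElem_mem _))
  have hi : w.idxOf s[j] < w.length := List.idxOf_lt_length_iff.mpr hmem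
  have hσi : (w.map fun k => s.idxOf k + 1)[w.idxOf s[j]]'(by simpa) = j + 1 := by
    rw [List.getElem_map, List.getElem_idxOf hi,
      List.Nodup.idxOf_getElem (isPermList_nodup hs) j hj]
  have hndσ : (w.map fun k => s.idxOf k + 1).Nodup :=
    isPermList_nodup (isPermList_posMap hs hw)
  rw [← hσi, List.Nodup.idxOf_getElem hndσ]

end Aux

/-- For every `π ∈ Sₙ`, the permutation `s(π)⁻¹ · π` avoids 231 and has the same skeleton
as `π`; consequently it is the unique 231-avoiding permutation with the same skeleton as
`π`, i.e. `sw↓(π) = s(π)⁻¹ · π`. -/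
theorem swDown_eq (n : ℕ) (π : List ℕ) (hπ : IsPermList n π) :
    IsPermList n (compw (invw (stackSort π)) π) ∧
      Avoids231 (compw (invw (stackSort π)) π) ∧
      skel (compw (invw (stackSort π)) π) = skel π ∧
      ∀ m, IsPermList n m → Avoids231 m → skel m = skel π →
        m = compw (invw (stackSort π)) π := by
  have hlenπ : π.length = n := isPermList_length hπ
  have hs : IsPermList n (stackSort π) := (stackSort_perm π).trans hπ
  have hlens : (stackSort π).length = n := isPermList_length hs
  have hσeq : compw (invw (stackSort π)) π = π.map fun k => (stackSort π).idxOf k + 1 := by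
    apply compw_invw_eq
    intro k hk
    rw [hlens]
    exact (isPermList_mem hπ).mp hk
  rw [hσeq]
  have hG1 : IsPermList n (π.map fun k => (stackSort π).idxOf k + 1) :=
    isPermList_posMap hs hπ
  have hG2 : Avoids231 (π.map fun k => (stackSort π).idxOf k + 1) :=
    avoids231_posMap π (isPermList_nodup hπ)
  have hskelσ : skel (π.map fun k => (stackSort π).idxOf k + 1) = skel π := by
    rw [skel_eq_invw hG1 hG2]
    have hskelπ : skel π = (stackSort π).map fun k => π.idxOf k + 1 := by
      unfold skel
      apply compw_invw_eq
      intro k hk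
      rw [hlenπ]
      exact (isPermList_mem hs).mp hk
    rw [hskelπ]
    apply List.ext_getElem
    · rw [length_invw]
      simp [isPermList_length hG1, hlens]
    intro j h1 h2
    have hj : j < (stackSort π).length := by
      rw [length_invw, isPermList_length hG1, ← hlens] at h1
      exact h1
    rw [invw_getElem _ h1, List.getElem_map]
    congr 1
    exact indexOf_posMap hs hπ hj
  refine ⟨hG1, hG2, hskelσ, ?_⟩
  intro m hm hmav hmskel
  have h1 : invw m = invw (π.map fun k => (stackSort π).idxOf k + 1) := by
    rw [← skel_eq_invw hm hmav, ← skel_eq_invw hG1 hG2, hmskel, hskelσ]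
  set σ := π.map fun k => (stackSort π).idxOf k + 1 with hσdef
  apply List.ext_getElem (by rw [isPermList_length hm, isPermList_length hG1])
  intro j hj1 hj2
  have hk12 : 1 ≤ m[j] ∧ m[j] ≤ n := (isPermList_mem hm).mp (List.getElem_mem _)
  have hinv : m.idxOf (m[j] - 1 + 1) = σ.idxOf (m[j] - 1 + 1) := by
    have hlt : m[j] - 1 < (invw m).length := by
      rw [length_invw, isPermList_length hm]
      omega
    have hlt2 : m[j] - 1 < (invw σ).length := by
      rw [length_invw, isPermList_length hG1]
      omega
    have hc := congrArg (fun l : List ℕ => l.getD (m[j] - 1) 0) h1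
    rw [List.getD_eq_getElem _ _ hlt, List.getD_eq_getElem _ _ hlt2,
      invw_getElem _ hlt, invw_getElem _ hlt2] at hc
    omega
  rw [show m[j] - 1 + 1 = m[j] by omega] at hinv
  have hidx : m.idxOf m[j] = j := List.Nodup.idxOf_getElem (isPermList_nodup hm) j hj1
  have hmemσ : m[j] ∈ σ := (isPermList_mem hG1).mpr hk12
  have hidxσ : σ.idxOf (σ[j]'hj2) = j := List.Nodup.idxOf_getElem (isPermList_nodup hG1) j hj2
  exact indexOf_inj_of_mem hmemσ (List.getElem_mem _) (by omega)
end

section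
/- For consecutive indices i, i+1 ∈ [n-1], the composition p_i ∘ p_{i+1} of polyurethane toggles has order dividing 6: (p_i ∘ p_{i+1})^6 is the identity on S_n. -/
namespace PolyAux
def sw01 : Fin 3 → Fin 3 := ![1,0,2]
def sw12 : Fin 3 → Fin 3 := ![0,2,1]
def bigB (q1 q2 : Bool) (a b : Fin 3) : Bool :=
  (q1 && decide (min a b = 0 ∧ 1 ≤ max a b)) || (q2 && decide (min a b ≤ 1 ∧ max a b = 2))
def applies1 (r : Fin 3 → Fin 3) (q1 q2 : Bool) (t : Fin 3 → Fin 3) : Bool :=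
  bigB q1 q2 (r (t 0)) (r (t 1)) ||
    decide (min (r (t 0)) (r (t 1)) < r (t 2) ∧ r (t 2) < max (r (t 0)) (r (t 1)))
def applies2 (r : Fin 3 → Fin 3) (q1 q2 : Bool) (t : Fin 3 → Fin 3) : Bool :=
  bigB q1 q2 (r (t 1)) (r (t 2))
def astep (r : Fin 3 → Fin 3) (q1 q2 : Bool) (t : Fin 3 → Fin 3) : Fin 3 → Fin 3 :=
  let t' := if applies2 r q1 q2 t then t ∘ sw12 else t
  if applies1 r q1 q2 t' then t' ∘ sw01 else t'

set_option maxRecDepth 10000 in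
theorem astep_six : ∀ r : Fin 3 → Fin 3, Function.Injective r → ∀ q1 q2 t,
    Function.Injective t → (astep r q1 q2)^[6] t = t := by decide

theorem bigB_01 : ∀ q1 q2, bigB q1 q2 0 1 = q1 := by decide
theorem bigB_10 : ∀ q1 q2, bigB q1 q2 1 0 = q1 := by decide
theorem bigB_12 : ∀ q1 q2, bigB q1 q2 1 2 = q2 := by decide
theorem bigB_21 : ∀ q1 q2, bigB q1 q2 2 1 = q2 := by decide
theorem bigB_02 : ∀ q1 q2, bigB q1 q2 0 2 = (q1 || q2) := by decide
theorem bigB_20 : ∀ q1 q2, bigB q1 q2 2 0 = (q1 || q2) := by decide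

theorem idxOf_map {f : ℕ → ℕ} (hf : Function.Injective f) (l : List ℕ) (a : ℕ) :
    (l.map f).idxOf (f a) = l.idxOf a := by
  induction l with
  | nil => simp
  | cons b t ih =>
    by_cases h : b = a
    · simp [List.idxOf_cons, h]
    · simp [List.idxOf_cons, ih, h, hf.ne h]

theorem exists_sorted (P : Fin 3 → ℕ) (h : Function.Injective P) :
    ∃ σ : Equiv.Perm (Fin 3), P (σ 0) < P (σ 1) ∧ P (σ 1) < P (σ 2) := by
  refine ⟨Tuple.sort P, ?_, ?_⟩ <;>
    exact ((Tuple.monotone_sort P) (by decide)).lt_of_ne (fun he => by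
      have := h he; simp_all [Equiv.injective (Tuple.sort P) |>.eq_iff])

def f3 (i : ℕ) (g : Fin 3 → Fin 3) : ℕ → ℕ := fun x =>
  if x = i then i + g 0 else if x = i + 1 then i + g 1 else if x = i + 2 then i + g 2 else x

theorem f3_at0 (i : ℕ) (g : Fin 3 → Fin 3) : f3 i g i = i + g 0 := by simp [f3]
theorem f3_at1 (i : ℕ) (g : Fin 3 → Fin 3) : f3 i g (i + 1) = i + g 1 := by simp [f3]
theorem f3_at2 (i : ℕ) (g : Fin 3 → Fin 3) : f3 i g (i + 2) = i + g 2 := by simp [f3]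

theorem f3_apply (i : ℕ) (g : Fin 3 → Fin 3) (k : Fin 3) : f3 i g (i + k) = i + g k := by
  fin_cases k <;> simp [f3]

theorem f3_apply_ne (i : ℕ) (g : Fin 3 → Fin 3) {x : ℕ} (h0 : x ≠ i) (h1 : x ≠ i + 1)
    (h2 : x ≠ i + 2) : f3 i g x = x := by
  simp [f3, h0, h1, h2]

theorem f3_injective (i : ℕ) (g : Equiv.Perm (Fin 3)) : Function.Injective (f3 i ⇑g) := by
  have h : ∀ x, f3 i ⇑g⁻¹ (f3 i ⇑g x) = x := by
    intro x
    by_cases h0 : x = i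
    · rw [h0, f3_at0]
      have e : (i : ℕ) + ⇑g 0 = i + ((g 0 : Fin 3) : ℕ) := rfl
      rw [e, f3_apply, ← Equiv.Perm.mul_apply, inv_mul_cancel]; simp
    by_cases h1 : x = i + 1
    · rw [h1, f3_at1]
      have e : (i : ℕ) + ⇑g 1 = i + ((g 1 : Fin 3) : ℕ) := rfl
      rw [e, f3_apply, ← Equiv.Perm.mul_apply, inv_mul_cancel]; simp
    by_cases h2 : x = i + 2
    · rw [h2, f3_at2]
      have e : (i : ℕ) + ⇑g 2 = i + ((g 2 : Fin 3) : ℕ) := rfl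
      rw [e, f3_apply, ← Equiv.Perm.mul_apply, inv_mul_cancel]; simp
    · rw [f3_apply_ne i _ h0 h1 h2, f3_apply_ne i _ h0 h1 h2]
  exact Function.LeftInverse.injective h

theorem f3_one (i : ℕ) : f3 i ⇑(1 : Equiv.Perm (Fin 3)) = id := by
  funext x
  by_cases h0 : x = i
  · simp [f3, h0]
  by_cases h1 : x = i + 1
  · simp [f3, h0, h1]
  by_cases h2 : x = i + 2
  · simp [f3, h0, h1, h2]
  · simp [f3, h0, h1, h2]

theorem swap01_fun : ⇑(Equiv.swap (0 : Fin 3) 1) = sw01 := by decide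
theorem swap12_fun : ⇑(Equiv.swap (1 : Fin 3) 2) = sw12 := by decide

theorem swapval01 (i : ℕ) (v : Fin 3) :
    (if (i + v : ℕ) = i then i + 1 else if (i + v : ℕ) = i + 1 then i else (i + v : ℕ))
      = i + sw01 v := by
  fin_cases v <;> simp [sw01]

theorem swapval12 (i : ℕ) (v : Fin 3) :
    (if (i + v : ℕ) = i + 1 then i + 1 + 1 else if (i + v : ℕ) = i + 1 + 1 then i + 1
      else (i + v : ℕ)) = i + sw12 v := by
  fin_cases v <;> simp [sw12] <;> omega

theorem comp01 (i : ℕ) (g : Fin 3 → Fin 3) :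
    ((fun x => if x = i then i + 1 else if x = i + 1 then i else x) ∘ f3 i g)
      = f3 i (sw01 ∘ g) := by
  funext x
  by_cases h0 : x = i
  · rw [Function.comp_apply, h0, f3_at0, f3_at0]; exact swapval01 i (g 0)
  by_cases h1 : x = i + 1
  · rw [Function.comp_apply, h1, f3_at1, f3_at1]; exact swapval01 i (g 1)
  by_cases h2 : x = i + 2
  · rw [Function.comp_apply, h2, f3_at2, f3_at2]; exact swapval01 i (g 2)
  · rw [Function.comp_apply, f3_apply_ne i _ h0 h1 h2, f3_apply_ne i _ h0 h1 h2,
      if_neg h0, if_neg h1]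

theorem comp12 (i : ℕ) (g : Fin 3 → Fin 3) :
    ((fun x => if x = i + 1 then i + 1 + 1 else if x = i + 1 + 1 then i + 1 else x) ∘ f3 i g)
      = f3 i (sw12 ∘ g) := by
  funext x
  by_cases h0 : x = i
  · rw [Function.comp_apply, h0, f3_at0, f3_at0]; exact swapval12 i (g 0)
  by_cases h1 : x = i + 1
  · rw [Function.comp_apply, h1, f3_at1, f3_at1]; exact swapval12 i (g 1)
  by_cases h2 : x = i + 2
  · rw [Function.comp_apply, h2, f3_at2, f3_at2]; exact swapval12 i (g 2)
  · rw [Function.comp_apply, f3_apply_ne i _ h0 h1 h2, f3_apply_ne i _ h0 h1 h2,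
      if_neg h1, if_neg (show x ≠ i + 1 + 1 by omega)]

end PolyAux

open PolyAux in
/-- For consecutive indices `i, i+1 ∈ [n-1]`, the composition `p i ∘ p (i+1)` has order
dividing 6 on `Sₙ`. -/
theorem toggle_comp_order_dvd_six (n i : ℕ) (hi₁ : 1 ≤ i) (hi₂ : i + 1 ≤ n - 1)
    (l : List ℕ) (hl : IsPermList n l) :
    (fun x => toggle i (toggle (i + 1) x))^[6] l = l := by
  classical
  have h3n : i + 2 ≤ n := by omega
  have hm : ∀ k : ℕ, k ≤ 2 → i + k ∈ l := by
    intro k hk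
    exact hl.mem_iff.2 (List.mem_range'_1.2 (by omega))
  set P : Fin 3 → ℕ := fun k => l.idxOf (i + (k : ℕ)) with hPdef
  have hPinj : Function.Injective P := by
    intro a b hab
    have h1 : (i + (a : ℕ)) ∈ l := hm a (by omega)
    have h2 : (i + (b : ℕ)) ∈ l := hm b (by omega)
    have := (List.idxOf_inj h1).1 hab
    exact Fin.ext (by omega)
  obtain ⟨σ, hσ1, hσ2⟩ := exists_sorted P hPinj
  have hQmono : ∀ a b : Fin 3, a < b → P (σ a) < P (σ b) := by
    intro a b hab
    fin_cases a <;> fin_cases b <;>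
      first
        | exact absurd hab (by decide)
        | exact hσ1
        | exact hσ2
        | exact hσ1.trans hσ2
  have hPlt : ∀ j k : Fin 3, P j < P k ↔ σ.symm j < σ.symm k := by
    intro j k
    constructor
    · intro h
      rcases lt_trichotomy (σ.symm j) (σ.symm k) with hc | hc | hc
      · exact hc
      · exfalso
        have : j = k := by
          rw [← σ.apply_symm_apply j, ← σ.apply_symm_apply k, hc]
        rw [this] at h; omega
      · have := hQmono _ _ hc
        rw [σ.apply_symm_apply, σ.apply_symm_apply] at this; omega
    · intro h
      have := hQmono _ _ h
      rwa [σ.apply_symm_apply, σ.apply_symm_apply] at this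
  set q1 : Bool := decide (∃ a ∈ l, i + 2 < a ∧
    min (P (σ 0)) (P (σ 1)) < l.idxOf a ∧ l.idxOf a < max (P (σ 0)) (P (σ 1))) with hq1
  set q2 : Bool := decide (∃ a ∈ l, i + 2 < a ∧
    min (P (σ 1)) (P (σ 2)) < l.idxOf a ∧ l.idxOf a < max (P (σ 1)) (P (σ 2))) with hq2
  -- index of a big entry is not a P value
  have hne : ∀ a ∈ l, i + 2 < a → ∀ k : Fin 3, l.idxOf a ≠ P k := by
    intro a ha hgt k h
    have hk : (i + (k : ℕ)) ∈ l := hm k (by omega)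
    have := (List.idxOf_inj ha).1 h
    have : (k : ℕ) < 3 := k.isLt
    omega
  have hsplit : (∃ a ∈ l, i + 2 < a ∧
      min (P (σ 0)) (P (σ 2)) < l.idxOf a ∧ l.idxOf a < max (P (σ 0)) (P (σ 2))) ↔
      ((∃ a ∈ l, i + 2 < a ∧
        min (P (σ 0)) (P (σ 1)) < l.idxOf a ∧ l.idxOf a < max (P (σ 0)) (P (σ 1))) ∨
       (∃ a ∈ l, i + 2 < a ∧
        min (P (σ 1)) (P (σ 2)) < l.idxOf a ∧ l.idxOf a < max (P (σ 1)) (P (σ 2)))) := by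
    constructor
    · rintro ⟨a, ha, hgt, h1, h2⟩
      have hne1 := hne a ha hgt (σ 1)
      rcases lt_or_gt_of_ne hne1 with hc | hc
      · exact Or.inl ⟨a, ha, hgt, by omega, by omega⟩
      · exact Or.inr ⟨a, ha, hgt, by omega, by omega⟩
    · rintro (⟨a, ha, hgt, h1, h2⟩ | ⟨a, ha, hgt, h1, h2⟩) <;>
        exact ⟨a, ha, hgt, by omega, by omega⟩
  -- bridge for "Big" in rank coordinates
  have hbigB' : ∀ a b : Fin 3, a ≠ b →
      ((∃ x ∈ l, i + 2 < x ∧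
        min (P (σ a)) (P (σ b)) < l.idxOf x ∧ l.idxOf x < max (P (σ a)) (P (σ b))) ↔
        bigB q1 q2 a b = true) := by
    have hsymm : ∀ a b : Fin 3, (∃ x ∈ l, i + 2 < x ∧
        min (P (σ a)) (P (σ b)) < l.idxOf x ∧ l.idxOf x < max (P (σ a)) (P (σ b))) ↔
        (∃ x ∈ l, i + 2 < x ∧
        min (P (σ b)) (P (σ a)) < l.idxOf x ∧ l.idxOf x < max (P (σ b)) (P (σ a))) := by
      intro a b
      rw [min_comm (P (σ b)), max_comm (P (σ b))]
    intro a b hab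
    fin_cases a <;> fin_cases b <;>
      simp only [Fin.zero_eta, Fin.mk_one, show (⟨2, by omega⟩ : Fin 3) = 2 from rfl] at hab ⊢
    · exact absurd rfl hab
    · rw [bigB_01, hq1, decide_eq_true_iff]
    · rw [bigB_02, hsplit, hq1, hq2]
      simp only [Bool.or_eq_true, decide_eq_true_iff]
    · rw [bigB_10, hq1, decide_eq_true_iff, hsymm]
    · exact absurd rfl hab
    · rw [bigB_12, hq2, decide_eq_true_iff]
    · rw [bigB_20, hsymm, hsplit, hq1, hq2]
      simp only [Bool.or_eq_true, decide_eq_true_iff]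
    · rw [bigB_21, hq2, decide_eq_true_iff, hsymm]
    · exact absurd rfl hab
  have hbigB : ∀ j k : Fin 3, j ≠ k →
      ((∃ x ∈ l, i + 2 < x ∧
        min (P j) (P k) < l.idxOf x ∧ l.idxOf x < max (P j) (P k)) ↔
        bigB q1 q2 (σ.symm j) (σ.symm k) = true) := by
    intro j k hjk
    have := hbigB' (σ.symm j) (σ.symm k) (fun h => hjk (by
      rw [← σ.apply_symm_apply j, h, σ.apply_symm_apply]))
    simpa [σ.apply_symm_apply] using this
  have hbtw : ∀ j k m : Fin 3,
      (min (P j) (P k) < P m ∧ P m < max (P j) (P k)) ↔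
      (min (σ.symm j) (σ.symm k) < σ.symm m ∧ σ.symm m < max (σ.symm j) (σ.symm k)) := by
    intro j k m
    simp only [min_lt_iff, lt_max_iff, hPlt]

  -- index computations in mapped lists
  have idxm : ∀ (g : Equiv.Perm (Fin 3)) (m : Fin 3),
      (l.map (f3 i ⇑g)).idxOf (i + (m : ℕ)) = P (g⁻¹ m) := by
    intro g m
    have e : (i : ℕ) + (m : ℕ) = f3 i ⇑g (i + ((g⁻¹ m : Fin 3) : ℕ)) := by
      rw [f3_apply]
      have : g (g⁻¹ m) = m := by rw [← Equiv.Perm.mul_apply, mul_inv_cancel, Equiv.Perm.one_apply]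
      rw [this]
    rw [e, idxOf_map (f3_injective i g)]
  have idx0 : ∀ g : Equiv.Perm (Fin 3),
      (l.map (f3 i ⇑g)).idxOf i = P (g⁻¹ 0) := by
    intro g
    have := idxm g 0
    simpa using this
  have idx1 : ∀ g : Equiv.Perm (Fin 3),
      (l.map (f3 i ⇑g)).idxOf (i + 1) = P (g⁻¹ 1) := by
    intro g
    have := idxm g 1
    simpa using this
  have idx2 : ∀ g : Equiv.Perm (Fin 3),
      (l.map (f3 i ⇑g)).idxOf (i + 2) = P (g⁻¹ 2) := by
    intro g
    have := idxm g 2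
    simpa using this
  have idxbig : ∀ (g : Equiv.Perm (Fin 3)) (a : ℕ), a ∈ l → i + 2 < a →
      (l.map (f3 i ⇑g)).idxOf a = l.idxOf a := by
    intro g a ha hgt
    conv_lhs => rw [show a = f3 i ⇑g a from
      (f3_apply_ne i _ (by omega) (by omega) (by omega)).symm]
    rw [idxOf_map (f3_injective i g)]
  have memm : ∀ (g : Equiv.Perm (Fin 3)) (m : Fin 3),
      (i + (m : ℕ)) ∈ l.map (f3 i ⇑g) := by
    intro g m
    refine List.mem_map.2 ⟨i + ((g⁻¹ m : Fin 3) : ℕ), hm _ (by omega), ?_⟩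
    rw [f3_apply]
    have : g (g⁻¹ m) = m := by rw [← Equiv.Perm.mul_apply, mul_inv_cancel, Equiv.Perm.one_apply]
    rw [this]
  have membig : ∀ (g : Equiv.Perm (Fin 3)) (a : ℕ), a ∈ l → i + 2 < a →
      a ∈ l.map (f3 i ⇑g) := by
    intro g a ha hgt
    exact List.mem_map.2 ⟨a, ha, f3_apply_ne i _ (by omega) (by omega) (by omega)⟩
  have hwit : ∀ (g : Equiv.Perm (Fin 3)) (a : ℕ), a ∈ l.map (f3 i ⇑g) → i + 1 < a →
      a = i + 2 ∨ (a ∈ l ∧ i + 2 < a) := by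
    intro g a hmem hgt
    rcases List.mem_map.1 hmem with ⟨b, hb, rfl⟩
    by_cases h0 : b = i
    · rw [h0, f3_at0] at hgt ⊢
      have : ((⇑g 0 : Fin 3) : ℕ) < 3 := (g 0).isLt
      left; omega
    by_cases h1 : b = i + 1
    · rw [h1, f3_at1] at hgt ⊢
      have : ((⇑g 1 : Fin 3) : ℕ) < 3 := (g 1).isLt
      left; omega
    by_cases h2 : b = i + 2
    · rw [h2, f3_at2] at hgt ⊢
      have : ((⇑g 2 : Fin 3) : ℕ) < 3 := (g 2).isLt
      left; omega
    · rw [f3_apply_ne i _ h0 h1 h2] at hgt ⊢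
      right
      exact ⟨hb, by omega⟩
  have hne01 : ∀ g : Equiv.Perm (Fin 3), g⁻¹ 0 ≠ g⁻¹ 1 := by
    intro g h
    have := g⁻¹.injective h
    exact absurd this (by decide)
  have hne12 : ∀ g : Equiv.Perm (Fin 3), g⁻¹ 1 ≠ g⁻¹ 2 := by
    intro g h
    have := g⁻¹.injective h
    exact absurd this (by decide)
  -- the two bridges
  have bridge1 : ∀ g : Equiv.Perm (Fin 3),
      ToggleApplies i (l.map (f3 i ⇑g)) ↔
        applies1 (⇑σ.symm) q1 q2 (fun k => g⁻¹ k) = true := by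
    intro g
    have hRHS : (applies1 (⇑σ.symm) q1 q2 (fun k => g⁻¹ k) = true) ↔
        (bigB q1 q2 (σ.symm (g⁻¹ 0)) (σ.symm (g⁻¹ 1)) = true ∨
          (min (σ.symm (g⁻¹ 0)) (σ.symm (g⁻¹ 1)) < σ.symm (g⁻¹ 2) ∧
           σ.symm (g⁻¹ 2) < max (σ.symm (g⁻¹ 0)) (σ.symm (g⁻¹ 1)))) := by
      simp [applies1]
    rw [hRHS]
    constructor
    · rintro ⟨a, hma, hgt, h1, h2⟩
      rw [idx0 g, idx1 g] at h1 h2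
      rcases hwit g a hma hgt with rfl | ⟨hal, hgt2⟩
      · rw [idx2 g] at h1 h2
        exact Or.inr ((hbtw (g⁻¹ 0) (g⁻¹ 1) (g⁻¹ 2)).1 ⟨h1, h2⟩)
      · rw [idxbig g a hal hgt2] at h1 h2
        exact Or.inl ((hbigB _ _ (hne01 g)).1 ⟨a, hal, hgt2, h1, h2⟩)
    · rintro (hb | hb)
      · obtain ⟨a, hal, hgt2, h1, h2⟩ := (hbigB _ _ (hne01 g)).2 hb
        refine ⟨a, membig g a hal hgt2, by omega, ?_, ?_⟩
        · rw [idx0 g, idx1 g, idxbig g a hal hgt2]; exact h1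
        · rw [idx0 g, idx1 g, idxbig g a hal hgt2]; exact h2
      · have h12 := (hbtw (g⁻¹ 0) (g⁻¹ 1) (g⁻¹ 2)).2 hb
        refine ⟨i + 2, ?_, by omega, ?_, ?_⟩
        · have := memm g 2
          simpa using this
        · rw [idx0 g, idx1 g, idx2 g]; exact h12.1
        · rw [idx0 g, idx1 g, idx2 g]; exact h12.2
  have bridge2 : ∀ g : Equiv.Perm (Fin 3),
      ToggleApplies (i + 1) (l.map (f3 i ⇑g)) ↔
        applies2 (⇑σ.symm) q1 q2 (fun k => g⁻¹ k) = true := by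
    intro g
    have hRHS : (applies2 (⇑σ.symm) q1 q2 (fun k => g⁻¹ k) = true) ↔
        bigB q1 q2 (σ.symm (g⁻¹ 1)) (σ.symm (g⁻¹ 2)) = true := by
      simp [applies2]
    rw [hRHS]
    constructor
    · rintro ⟨a, hma, hgt, h1, h2⟩
      rw [idx1 g, show i + 1 + 1 = i + 2 from rfl, idx2 g] at h1 h2
      rcases hwit g a hma (by omega) with rfl | ⟨hal, hgt2⟩
      · omega
      · rw [idxbig g a hal hgt2] at h1 h2
        exact (hbigB _ _ (hne12 g)).1 ⟨a, hal, hgt2, h1, h2⟩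
    · intro hb
      obtain ⟨a, hal, hgt2, h1, h2⟩ := (hbigB _ _ (hne12 g)).2 hb
      refine ⟨a, membig g a hal hgt2, by omega, ?_, ?_⟩
      · rw [idx1 g, show i + 1 + 1 = i + 2 from rfl, idx2 g, idxbig g a hal hgt2]; exact h1
      · rw [idx1 g, show i + 1 + 1 = i + 2 from rfl, idx2 g, idxbig g a hal hgt2]; exact h2
  -- swapEntries as group action
  have hswap1 : ∀ g : Equiv.Perm (Fin 3),
      swapEntries i (l.map (f3 i ⇑g)) = l.map (f3 i ⇑(Equiv.swap (0 : Fin 3) 1 * g)) := by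
    intro g
    rw [swapEntries, List.map_map, comp01]
    congr 1
    rw [show ⇑(Equiv.swap (0 : Fin 3) 1 * g) = ⇑(Equiv.swap (0 : Fin 3) 1) ∘ ⇑g from rfl,
      swap01_fun]
  have hswap2 : ∀ g : Equiv.Perm (Fin 3),
      swapEntries (i + 1) (l.map (f3 i ⇑g)) = l.map (f3 i ⇑(Equiv.swap (1 : Fin 3) 2 * g)) := by
    intro g
    rw [swapEntries, List.map_map, comp12]
    congr 1
    rw [show ⇑(Equiv.swap (1 : Fin 3) 2 * g) = ⇑(Equiv.swap (1 : Fin 3) 2) ∘ ⇑g from rfl,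
      swap12_fun]
  have ht01 : ∀ g : Equiv.Perm (Fin 3),
      (fun k => (Equiv.swap (0 : Fin 3) 1 * g)⁻¹ k) = (fun k => g⁻¹ k) ∘ sw01 := by
    intro g
    funext k
    show (Equiv.swap (0 : Fin 3) 1 * g)⁻¹ k = g⁻¹ (sw01 k)
    rw [← swap01_fun, mul_inv_rev, Equiv.swap_inv, Equiv.Perm.mul_apply]
  have ht12 : ∀ g : Equiv.Perm (Fin 3),
      (fun k => (Equiv.swap (1 : Fin 3) 2 * g)⁻¹ k) = (fun k => g⁻¹ k) ∘ sw12 := by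
    intro g
    funext k
    show (Equiv.swap (1 : Fin 3) 2 * g)⁻¹ k = g⁻¹ (sw12 k)
    rw [← swap12_fun, mul_inv_rev, Equiv.swap_inv, Equiv.Perm.mul_apply]
  -- one combined step
  have key : ∀ g : Equiv.Perm (Fin 3), ∃ g' : Equiv.Perm (Fin 3),
      toggle i (toggle (i + 1) (l.map (f3 i ⇑g))) = l.map (f3 i ⇑g') ∧
      (fun k => g'⁻¹ k) = astep (⇑σ.symm) q1 q2 (fun k => g⁻¹ k) := by
    intro g
    by_cases hA2 : ToggleApplies (i + 1) (l.map (f3 i ⇑g))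
    · have e2 : toggle (i + 1) (l.map (f3 i ⇑g))
          = l.map (f3 i ⇑(Equiv.swap (1 : Fin 3) 2 * g)) := by
        rw [toggle, if_pos hA2, hswap2 g]
      set g₂ := Equiv.swap (1 : Fin 3) 2 * g with hg₂
      have hc2 : applies2 (⇑σ.symm) q1 q2 (fun k => g⁻¹ k) = true := (bridge2 g).1 hA2
      by_cases hA1 : ToggleApplies i (l.map (f3 i ⇑g₂))
      · refine ⟨Equiv.swap (0 : Fin 3) 1 * g₂, ?_, ?_⟩
        · rw [e2, toggle, if_pos hA1, hswap1 g₂]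
        · have hc1 : applies1 (⇑σ.symm) q1 q2 (fun k => g₂⁻¹ k) = true := (bridge1 g₂).1 hA1
          rw [ht01 g₂, ht12 g] at *
          rw [astep]
          simp only [hc2, if_true, ht12 g] at *
          rw [if_pos hc1]
      · refine ⟨g₂, ?_, ?_⟩
        · rw [e2, toggle, if_neg hA1]
        · have hc1 : ¬ applies1 (⇑σ.symm) q1 q2 (fun k => g₂⁻¹ k) = true :=
            fun h => hA1 ((bridge1 g₂).2 h)
          rw [ht12 g] at *
          rw [astep]
          simp only [hc2, if_true] at *
          rw [if_neg hc1]
    · have e2 : toggle (i + 1) (l.map (f3 i ⇑g)) = l.map (f3 i ⇑g) := by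
        rw [toggle, if_neg hA2]
      have hc2 : ¬ applies2 (⇑σ.symm) q1 q2 (fun k => g⁻¹ k) = true :=
        fun h => hA2 ((bridge2 g).2 h)
      by_cases hA1 : ToggleApplies i (l.map (f3 i ⇑g))
      · refine ⟨Equiv.swap (0 : Fin 3) 1 * g, ?_, ?_⟩
        · rw [e2, toggle, if_pos hA1, hswap1 g]
        · have hc1 : applies1 (⇑σ.symm) q1 q2 (fun k => g⁻¹ k) = true := (bridge1 g).1 hA1
          rw [ht01 g]
          rw [astep]
          simp only [hc2, Bool.false_eq_true, if_false]
          rw [if_pos hc1]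
      · refine ⟨g, ?_, ?_⟩
        · rw [e2, toggle, if_neg hA1]
        · have hc1 : ¬ applies1 (⇑σ.symm) q1 q2 (fun k => g⁻¹ k) = true :=
            fun h => hA1 ((bridge1 g).2 h)
          rw [astep]
          simp only [hc2, Bool.false_eq_true, if_false]
          rw [if_neg hc1]
  -- iterate
  have iter : ∀ m : ℕ, ∃ g : Equiv.Perm (Fin 3),
      (fun x => toggle i (toggle (i + 1) x))^[m] l = l.map (f3 i ⇑g) ∧
      (fun k => g⁻¹ k) = (astep (⇑σ.symm) q1 q2)^[m] id := by
    intro m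
    induction m with
    | zero =>
      refine ⟨1, ?_, ?_⟩
      · rw [Function.iterate_zero, id_eq, f3_one, List.map_id]
      · funext k
        simp
    | succ m ih =>
      obtain ⟨g, hg1, hg2⟩ := ih
      obtain ⟨g', hg'1, hg'2⟩ := key g
      refine ⟨g', ?_, ?_⟩
      · rw [Function.iterate_succ_apply', hg1]
        exact hg'1
      · rw [Function.iterate_succ_apply', ← hg2]
        exact hg'2
  obtain ⟨g, hg1, hg2⟩ := iter 6
  have h6 : (astep (⇑σ.symm) q1 q2)^[6] id = id :=
    astep_six (⇑σ.symm) σ.symm.injective q1 q2 id Function.injective_id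
  rw [h6] at hg2
  have hg : g = 1 := by
    have : g⁻¹ = 1 := by
      ext k
      have h' : g⁻¹ k = k := by simpa using congrFun hg2 k
      exact congrArg Fin.val h'
    simpa using congrArg (·⁻¹) this
  rw [hg1, hg, f3_one, List.map_id]
end
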